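/- Cassels' Lemma: Let (I_j)_{j∈ℕ} be a sequence of intervals in ℝ such that |I_j| → 0 as j → ∞, and let U_j ⊆ I_j be a sequence of Lebesgue measurable sets. Suppose that for some c > 0 one has μ(U_j) ≥ c |I_j| for all j, where μ denotes Lebesgue measure and |I| the length of an interval I. Then the sets limsup_{j→∞} I_j and limsup_{j→∞} U_j have the same Lebesgue measure. -/

import Mathlib

open MeasureTheory Filter Set Metric

/-- **Cassels' Lemma**: if each `U j` occupies a fixed positive proportion of the interval
`I j` and the lengths of the intervals tend to `0`, then the limsup sets of the `I j` and
of the `U j` have the same Lebesgue measure. -/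
theorem cassels_lemma
    (I U : ℕ → Set ℝ)
    (hI : ∀ j, (I j).OrdConnected)
    (hlen : Tendsto (fun j => volume (I j)) atTop (nhds 0))
    (hUI : ∀ j, U j ⊆ I j)
    (hUmeas : ∀ j, NullMeasurableSet (U j) volume)
    (c : ℝ) (hc : 0 < c)
    (hcU : ∀ j, ENNReal.ofReal c * volume (I j) ≤ volume (U j)) :
    volume (limsup I atTop) = volume (limsup U atTop) := by
  -- the easy inclusion
  have hsub : limsup U atTop ⊆ limsup I atTop :=
    limsup_le_limsup (Eventually.of_forall fun j => hUI j)
  -- replace `c` by `c' = min c 1`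
  set c' : ℝ := min c 1 with hc'def
  have hc'0 : 0 < c' := lt_min hc one_pos
  have hc'1 : c' ≤ 1 := min_le_right _ _
  have hcU' : ∀ j, ENNReal.ofReal c' * volume (I j) ≤ volume (U j) := fun j =>
    le_trans (mul_le_mul_left (ENNReal.ofReal_le_ofReal (min_le_left _ _)) _) (hcU j)
  -- the union of the null intervals
  set N : Set ℝ := ⋃ j ∈ {j | volume (I j) = 0}, I j with hNdef
  have hN : volume N = 0 := by
    refine (measure_biUnion_null_iff (Set.to_countable _)).2 ?_
    exact fun j hj => hj
  -- the key family of sets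
  set E : ℕ → Set ℝ := fun t => (limsup I atTop \ N) \ ⋃ j ∈ Ici t, U j with hEdef
  have hEnm : ∀ t, NullMeasurableSet (E t) volume := by
    intro t
    have h1 : MeasurableSet (limsup I atTop) :=
      MeasurableSet.measurableSet_limsup fun j => (hI j).measurableSet
    have h2 : MeasurableSet N :=
      MeasurableSet.biUnion (Set.to_countable _) fun j _ => (hI j).measurableSet
    exact ((h1.diff h2).nullMeasurableSet).diff
      (NullMeasurableSet.biUnion (Set.to_countable _) fun j _ => hUmeas j)
  -- each `E t` is null, by the Lebesgue density theorem
  have hE : ∀ t, volume (E t) = 0 := by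
    intro t
    -- every point of `E t` fails the density property
    have key : ∀ x ∈ E t,
        ¬ Tendsto (fun r => volume (E t ∩ closedBall x r) / volume (closedBall x r))
          (nhdsWithin 0 (Ioi 0)) (nhds 1) := by
      rintro x ⟨⟨hxI, hxN⟩, hxU⟩ hx
      -- the ratio is eventually close to 1
      have hlt1 : ENNReal.ofReal (1 - c' / 2) < 1 := by
        rw [← ENNReal.ofReal_one]
        exact ENNReal.ofReal_lt_ofReal_iff_of_nonneg (by linarith) |>.2 (by linarith)
      have hev := hx.eventually (eventually_gt_nhds hlt1)
      rw [eventually_iff, mem_nhdsGT_iff_exists_Ioo_subset] at hev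
      obtain ⟨δ, hδmem, hδ⟩ := hev
      have hδ0 : (0 : ℝ) < δ := hδmem
      -- choose a good index `j`
      have hfreq : ∃ᶠ j in atTop, x ∈ I j := by
        rwa [← mem_limsup_iff_frequently_mem]
      have hev2 : ∀ᶠ j in atTop, volume (I j) < ENNReal.ofReal δ :=
        hlen.eventually (eventually_lt_nhds (by simp [hδ0]))
      obtain ⟨j, ⟨hjI, hjδ⟩, hjt⟩ :=
        ((hfreq.and_eventually hev2).and_eventually (eventually_ge_atTop t)).exists
      -- basic facts about `I j`
      have hvol0 : volume (I j) ≠ 0 := by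
        intro h0
        exact hxN (Set.mem_biUnion (show j ∈ {j | volume (I j) = 0} from h0) hjI)
      have hvoltop : volume (I j) ≠ ⊤ := (hjδ.trans ENNReal.ofReal_lt_top).ne
      set L : ℝ := (volume (I j)).toReal with hLdef
      have hL0 : 0 < L := ENNReal.toReal_pos hvol0 hvoltop
      have hLδ : L < δ := by
        rw [hLdef]
        exact (ENNReal.lt_ofReal_iff_toReal_lt hvoltop).1 hjδ
      have hIL : volume (I j) = ENNReal.ofReal L := (ENNReal.ofReal_toReal hvoltop).symm
      -- `I j ⊆ closedBall x L`
      have hIball : I j ⊆ closedBall x L := by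
        intro y hy
        have huIcc : uIcc x y ⊆ I j := (hI j).uIcc_subset hjI hy
        have : ENNReal.ofReal |y - x| ≤ volume (I j) := by
          rw [← Real.volume_interval]
          exact measure_mono huIcc
        rw [hIL] at this
        have := (ENNReal.ofReal_le_ofReal_iff hL0.le).1 this
        rwa [mem_closedBall, Real.dist_eq]
      -- disjointness of `E t ∩ closedBall x L` and `U j`
      have hdisj : Disjoint (E t ∩ closedBall x L) (U j) := by
        refine Set.disjoint_left.2 fun y hy hyU => ?_
        exact hy.1.2 (Set.mem_biUnion hjt hyU)
      -- the measure estimate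
      have hadd : volume (E t ∩ closedBall x L) + volume (U j)
          ≤ volume (closedBall x L) := by
        rw [← measure_union₀ (hUmeas j) hdisj.aedisjoint]
        exact measure_mono (Set.union_subset Set.inter_subset_right
          ((hUI j).trans hIball))
      have hUj : ENNReal.ofReal (c' * L) ≤ volume (U j) := by
        rw [ENNReal.ofReal_mul hc'0.le, ← hIL]
        exact hcU' j
      have hEB : volume (E t ∩ closedBall x L) ≤ ENNReal.ofReal ((2 - c') * L) := by
        have h1 : volume (E t ∩ closedBall x L)
            ≤ volume (closedBall x L) - volume (U j) :=
          ENNReal.le_sub_of_add_le_right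
            (((measure_mono (hUI j)).trans_lt (hIL ▸ ENNReal.ofReal_lt_top)).ne) hadd
        refine h1.trans ?_
        rw [Real.volume_closedBall]
        calc ENNReal.ofReal (2 * L) - volume (U j)
            ≤ ENNReal.ofReal (2 * L) - ENNReal.ofReal (c' * L) :=
              tsub_le_tsub_left hUj _
          _ = ENNReal.ofReal (2 * L - c' * L) := (ENNReal.ofReal_sub _ (by positivity)).symm
          _ = ENNReal.ofReal ((2 - c') * L) := by ring_nf
      -- the ratio bound
      have hratio : volume (E t ∩ closedBall x L) / volume (closedBall x L)
          ≤ ENNReal.ofReal (1 - c' / 2) := by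
        rw [Real.volume_closedBall]
        refine le_trans (ENNReal.div_le_div_right hEB _) ?_
        rw [← ENNReal.ofReal_div_of_pos (by positivity)]
        apply ENNReal.ofReal_le_ofReal
        rw [div_le_iff₀ (by positivity)]
        ring_nf
        nlinarith
      have := hδ ⟨hL0, hLδ⟩
      exact absurd hratio (not_le.2 this)
    -- conclude via the density theorem
    have hae := Besicovitch.ae_tendsto_measure_inter_div volume (E t)
    rw [ae_iff] at hae
    have hsub2 : E t ⊆ {x | ¬ Tendsto
        (fun r => volume (E t ∩ closedBall x r) / volume (closedBall x r))
        (nhdsWithin 0 (Ioi 0)) (nhds 1)} := fun x hx => key x hx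
    have : (volume.restrict (E t)) (E t) = 0 :=
      le_antisymm (le_trans (measure_mono hsub2) hae.le) zero_le
    rwa [Measure.restrict_apply₀' (hEnm t), Set.inter_self] at this
  -- assemble: `limsup I \ limsup U` is null
  have hnull : volume (limsup I atTop \ limsup U atTop) = 0 := by
    have hsub3 : limsup I atTop \ limsup U atTop ⊆ N ∪ ⋃ t, E t := by
      rintro x ⟨hxI, hxU⟩
      by_cases hxN : x ∈ N
      · exact Or.inl hxN
      · refine Or.inr ?_
        rw [mem_limsup_iff_frequently_mem, not_frequently] at hxU
        obtain ⟨t, ht⟩ := eventually_atTop.1 hxU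
        refine Set.mem_iUnion.2 ⟨t, ⟨⟨hxI, hxN⟩, ?_⟩⟩
        intro hmem
        obtain ⟨j, hj, hjU⟩ := Set.mem_iUnion₂.1 hmem
        exact ht j hj hjU
    refine measure_mono_null hsub3 ?_
    rw [measure_union_null_iff]
    exact ⟨hN, measure_iUnion_null hE⟩
  -- finish
  refine le_antisymm ?_ (measure_mono hsub)
  calc volume (limsup I atTop)
      ≤ volume (limsup U atTop ∪ (limsup I atTop \ limsup U atTop)) :=
        measure_mono fun x hx => by
          by_cases h : x ∈ limsup U atTop
          · exact Or.inl h
          · exact Or.inr ⟨hx, h⟩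
    _ ≤ volume (limsup U atTop) + volume (limsup I atTop \ limsup U atTop) :=
        measure_union_le _ _
    _ = volume (limsup U atTop) := by rw [hnull, add_zero]
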